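/- Let G be a magmal comonad on a magmal category C with left cloaks, let (Y,υ) be a G-coalgebra and Z ∈ C. Define the Wood fusion morphism w_{υ,Z} : G[Y,Z] → [Y,GZ] as the composite [υ,1] ∘ G₂ˡ. If w_{δ_Y, Z} : G[GY,Z] → [GY,GZ] is invertible and w_{δ_{GY}, Z} : G[G²Y,Z] → [G²Y,GZ] is an epimorphism, then w_{υ,Z} is invertible. -/
import Mathlib


open CategoryTheory

namespace WoodStmt5

variable {C : Type*} [Category C]

/-- A magmal comonad: a comonad `G` on a magmal category `(C, T)` together with a natural
family `G₂ : G X ⊗ G Y ⟶ G (X ⊗ Y)` for which `ε` and `δ` are magmal. -/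
structure MagmalComonad (T : C ⥤ C ⥤ C) (G : Comonad C) where
  g2 : ∀ X Y : C, (T.obj (G.obj X)).obj (G.obj Y) ⟶ G.obj ((T.obj X).obj Y)
  natl : ∀ {X X' : C} (Y : C) (f : X ⟶ X'),
    (T.map (G.map f)).app (G.obj Y) ≫ g2 X' Y = g2 X Y ≫ G.map ((T.map f).app Y)
  natr : ∀ (X : C) {Y Y' : C} (g : Y ⟶ Y'),
    (T.obj (G.obj X)).map (G.map g) ≫ g2 X Y' = g2 X Y ≫ G.map ((T.obj X).map g)
  counit_comp : ∀ X Y : C, g2 X Y ≫ G.ε.app ((T.obj X).obj Y) =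
    (T.map (G.ε.app X)).app (G.obj Y) ≫ (T.obj X).map (G.ε.app Y)
  delta_comp : ∀ X Y : C, g2 X Y ≫ G.δ.app ((T.obj X).obj Y) =
    (T.map (G.δ.app X)).app (G.obj Y) ≫ (T.obj (G.obj (G.obj X))).map (G.δ.app Y)
      ≫ g2 (G.obj X) (G.obj Y) ≫ G.map (g2 X Y)

/-- `(E, ev)` is a left cloak of `Z` by `Y` for the tensor `T`: composition with
`ev : E ⊗ Y ⟶ Z` induces bijections `C(X, E) ≅ C(X ⊗ Y, Z)`. -/
def IsCloak (T : C ⥤ C ⥤ C) (Y Z E : C) (ev : (T.obj E).obj Y ⟶ Z) : Prop :=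
  ∀ (X : C) (f : (T.obj X).obj Y ⟶ Z), ∃! g : X ⟶ E, (T.map g).app Y ≫ ev = f

theorem IsCloak.hom_ext {T : C ⥤ C ⥤ C} {Y Z E : C} {ev : (T.obj E).obj Y ⟶ Z}
    (h : IsCloak T Y Z E ev) {X : C} {g g' : X ⟶ E}
    (hg : (T.map g).app Y ≫ ev = (T.map g').app Y ≫ ev) : g = g' := by
  obtain ⟨u, -, hu⟩ := h X ((T.map g').app Y ≫ ev)
  rw [hu g hg, hu g' rfl]

/-- Let `G` be a magmal comonad on a magmal category `C` with the
relevant left cloaks, and let `(Y, υ)` be a `G`-coalgebra and `Z ∈ C`.  Each Wood fusion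
morphism `w = [coaction, 1] ∘ G₂ˡ : G[Y',Z] ⟶ [Y',GZ]` is characterized by
`(w ⊗ 1) ≫ ev = (1 ⊗ coaction) ≫ G₂ ≫ G(ev)`.  If the fusion morphism `w₁ = w_{δ_Y,Z}`
at the cofree coalgebra on `Y` is invertible and the fusion morphism `w₂ = w_{δ_{GY},Z}`
at the cofree coalgebra on `GY` is an epimorphism, then the fusion morphism
`w = w_{υ,Z}` is invertible. -/
theorem wood_fusion_invertible (T : C ⥤ C ⥤ C) (G : Comonad C) (M : MagmalComonad T G)
    (A : G.Coalgebra) (Z : C)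
    -- cloaks [Y,Z], [Y,GZ]
    (E1 : C) (ev1 : (T.obj E1).obj A.A ⟶ Z) (h1 : IsCloak T A.A Z E1 ev1)
    (E1G : C) (ev1G : (T.obj E1G).obj A.A ⟶ G.obj Z) (h1G : IsCloak T A.A (G.obj Z) E1G ev1G)
    -- cloaks [GY,Z], [GY,GZ]
    (E2 : C) (ev2 : (T.obj E2).obj (G.obj A.A) ⟶ Z) (h2 : IsCloak T (G.obj A.A) Z E2 ev2)
    (E2G : C) (ev2G : (T.obj E2G).obj (G.obj A.A) ⟶ G.obj Z)
    (h2G : IsCloak T (G.obj A.A) (G.obj Z) E2G ev2G)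
    -- cloaks [G²Y,Z], [G²Y,GZ]
    (E3 : C) (ev3 : (T.obj E3).obj (G.obj (G.obj A.A)) ⟶ Z)
    (h3 : IsCloak T (G.obj (G.obj A.A)) Z E3 ev3)
    (E3G : C) (ev3G : (T.obj E3G).obj (G.obj (G.obj A.A)) ⟶ G.obj Z)
    (h3G : IsCloak T (G.obj (G.obj A.A)) (G.obj Z) E3G ev3G)
    -- the Wood fusion morphism `w_{υ,Z}`
    (w : G.obj E1 ⟶ E1G)
    (hw : (T.map w).app A.A ≫ ev1G =
      (T.obj (G.obj E1)).map A.a ≫ M.g2 E1 A.A ≫ G.map ev1)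
    -- the Wood fusion morphism `w₁ = w_{δ_Y,Z}`
    (w1 : G.obj E2 ⟶ E2G)
    (hw1 : (T.map w1).app (G.obj A.A) ≫ ev2G =
      (T.obj (G.obj E2)).map (G.δ.app A.A) ≫ M.g2 E2 (G.obj A.A) ≫ G.map ev2)
    -- the Wood fusion morphism `w₂ = w_{δ_{GY},Z}`
    (w2 : G.obj E3 ⟶ E3G)
    (hw2 : (T.map w2).app (G.obj (G.obj A.A)) ≫ ev3G =
      (T.obj (G.obj E3)).map (G.δ.app (G.obj A.A)) ≫ M.g2 E3 (G.obj (G.obj A.A)) ≫ G.map ev3)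
    (hinv : IsIso w1) (hepi : Epi w2) :
    IsIso w := by
  haveI := hinv
  -- the split-coequalizer maps, via the cloak universal properties
  obtain ⟨q, hq, -⟩ := h1 E2 ((T.obj E2).map A.a ≫ ev2)
  obtain ⟨s, hs, -⟩ := h2 E1 ((T.obj E1).map (G.ε.app A.A) ≫ ev1)
  obtain ⟨u, hu, -⟩ := h2 E3 ((T.obj E3).map (G.δ.app A.A) ≫ ev3)
  obtain ⟨v, hv, -⟩ := h2 E3 ((T.obj E3).map (G.map A.a) ≫ ev3)
  obtain ⟨q', hq', -⟩ := h1G E2G ((T.obj E2G).map A.a ≫ ev2G)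
  obtain ⟨s', hs', -⟩ := h2G E1G ((T.obj E1G).map (G.ε.app A.A) ≫ ev1G)
  obtain ⟨u', hu', -⟩ := h2G E3G ((T.obj E3G).map (G.δ.app A.A) ≫ ev3G)
  obtain ⟨v', hv', -⟩ := h2G E3G ((T.obj E3G).map (G.map A.a) ≫ ev3G)
  obtain ⟨t', ht', -⟩ := h3G E2G ((T.obj E2G).map (G.ε.app (G.obj A.A)) ≫ ev2G)
  -- relation R1 : s ≫ q = 𝟙
  have R1 : s ≫ q = 𝟙 E1 := by
    apply h1.hom_ext
    calc (T.map (s ≫ q)).app A.A ≫ ev1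
        = (T.map s).app A.A ≫ ((T.map q).app A.A ≫ ev1) := by
          rw [T.map_comp]; simp
      _ = (T.map s).app A.A ≫ (T.obj E2).map A.a ≫ ev2 := by rw [hq]
      _ = (T.obj E1).map A.a ≫ (T.map s).app (G.obj A.A) ≫ ev2 := by
          rw [← (T.map s).naturality_assoc A.a ev2]
      _ = (T.obj E1).map A.a ≫ (T.obj E1).map (G.ε.app A.A) ≫ ev1 := by rw [hs]
      _ = (T.obj E1).map (A.a ≫ G.ε.app A.A) ≫ ev1 := by
          rw [Functor.map_comp, Category.assoc]
      _ = (T.map (𝟙 E1)).app A.A ≫ ev1 := by rw [A.counit]; simp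
  -- key computation for R4
  have key : ∀ (x : E3 ⟶ E2) (d : G.obj A.A ⟶ G.obj (G.obj A.A)),
      ((T.map x).app (G.obj A.A) ≫ ev2 = (T.obj E3).map d ≫ ev3) →
      (T.map (x ≫ q)).app A.A ≫ ev1 = (T.obj E3).map (A.a ≫ d) ≫ ev3 := by
    intro x d hx
    calc (T.map (x ≫ q)).app A.A ≫ ev1
        = (T.map x).app A.A ≫ ((T.map q).app A.A ≫ ev1) := by rw [T.map_comp]; simp
      _ = (T.map x).app A.A ≫ (T.obj E2).map A.a ≫ ev2 := by rw [hq]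
      _ = (T.obj E3).map A.a ≫ (T.map x).app (G.obj A.A) ≫ ev2 := by
          rw [← (T.map x).naturality_assoc A.a ev2]
      _ = (T.obj E3).map A.a ≫ (T.obj E3).map d ≫ ev3 := by rw [hx]
      _ = (T.obj E3).map (A.a ≫ d) ≫ ev3 := by rw [Functor.map_comp, Category.assoc]
  -- relation R4 : u ≫ q = v ≫ q
  have R4 : u ≫ q = v ≫ q := by
    apply h1.hom_ext
    rw [key u (G.δ.app A.A) hu, key v (G.map A.a) hv, A.coassoc]
  -- relation R1' : s' ≫ q' = 𝟙
  have R1' : s' ≫ q' = 𝟙 E1G := by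
    apply h1G.hom_ext
    calc (T.map (s' ≫ q')).app A.A ≫ ev1G
        = (T.map s').app A.A ≫ ((T.map q').app A.A ≫ ev1G) := by rw [T.map_comp]; simp
      _ = (T.map s').app A.A ≫ (T.obj E2G).map A.a ≫ ev2G := by rw [hq']
      _ = (T.obj E1G).map A.a ≫ (T.map s').app (G.obj A.A) ≫ ev2G := by
          rw [← (T.map s').naturality_assoc A.a ev2G]
      _ = (T.obj E1G).map A.a ≫ (T.obj E1G).map (G.ε.app A.A) ≫ ev1G := by rw [hs']
      _ = (T.obj E1G).map (A.a ≫ G.ε.app A.A) ≫ ev1G := by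
          rw [Functor.map_comp, Category.assoc]
      _ = (T.map (𝟙 E1G)).app A.A ≫ ev1G := by rw [A.counit]; simp
  -- relation R2' : t' ≫ u' = 𝟙
  have R2' : t' ≫ u' = 𝟙 E2G := by
    apply h2G.hom_ext
    calc (T.map (t' ≫ u')).app (G.obj A.A) ≫ ev2G
        = (T.map t').app (G.obj A.A) ≫ ((T.map u').app (G.obj A.A) ≫ ev2G) := by
          rw [T.map_comp]; simp
      _ = (T.map t').app (G.obj A.A) ≫ (T.obj E3G).map (G.δ.app A.A) ≫ ev3G := by rw [hu']
      _ = (T.obj E2G).map (G.δ.app A.A) ≫ (T.map t').app (G.obj (G.obj A.A)) ≫ ev3G := by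
          rw [← (T.map t').naturality_assoc (G.δ.app A.A) ev3G]; rfl
      _ = (T.obj E2G).map (G.δ.app A.A) ≫ (T.obj E2G).map (G.ε.app (G.obj A.A)) ≫ ev2G := by
          rw [ht']
      _ = (T.obj E2G).map (G.δ.app A.A ≫ G.ε.app (G.obj A.A)) ≫ ev2G := by
          rw [Functor.map_comp, Category.assoc]
      _ = (T.map (𝟙 E2G)).app (G.obj A.A) ≫ ev2G := by rw [G.left_counit]; simp
  -- relation R3' : t' ≫ v' = q' ≫ s'
  have R3' : t' ≫ v' = q' ≫ s' := by
    apply h2G.hom_ext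
    have lhs : (T.map (t' ≫ v')).app (G.obj A.A) ≫ ev2G =
        (T.obj E2G).map (G.ε.app A.A ≫ A.a) ≫ ev2G := by
      calc (T.map (t' ≫ v')).app (G.obj A.A) ≫ ev2G
          = (T.map t').app (G.obj A.A) ≫ ((T.map v').app (G.obj A.A) ≫ ev2G) := by
            rw [T.map_comp]; simp
        _ = (T.map t').app (G.obj A.A) ≫ (T.obj E3G).map (G.map A.a) ≫ ev3G := by rw [hv']
        _ = (T.obj E2G).map (G.map A.a) ≫ (T.map t').app (G.obj (G.obj A.A)) ≫ ev3G := by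
            rw [← (T.map t').naturality_assoc (G.map A.a) ev3G]
        _ = (T.obj E2G).map (G.map A.a) ≫ (T.obj E2G).map (G.ε.app (G.obj A.A)) ≫ ev2G := by
            rw [ht']
        _ = (T.obj E2G).map (G.map A.a ≫ G.ε.app (G.obj A.A)) ≫ ev2G := by
            rw [Functor.map_comp, Category.assoc]
        _ = (T.obj E2G).map (G.ε.app A.A ≫ A.a) ≫ ev2G := by
            have := G.ε.naturality A.a
            simp only [Functor.id_map] at this
            rw [this]
    have rhs : (T.map (q' ≫ s')).app (G.obj A.A) ≫ ev2G =
        (T.obj E2G).map (G.ε.app A.A ≫ A.a) ≫ ev2G := by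
      calc (T.map (q' ≫ s')).app (G.obj A.A) ≫ ev2G
          = (T.map q').app (G.obj A.A) ≫ ((T.map s').app (G.obj A.A) ≫ ev2G) := by
            rw [T.map_comp]; simp
        _ = (T.map q').app (G.obj A.A) ≫ (T.obj E1G).map (G.ε.app A.A) ≫ ev1G := by rw [hs']
        _ = (T.obj E2G).map (G.ε.app A.A) ≫ (T.map q').app A.A ≫ ev1G := by
            rw [← (T.map q').naturality_assoc (G.ε.app A.A) ev1G]; rfl
        _ = (T.obj E2G).map (G.ε.app A.A) ≫ (T.obj E2G).map A.a ≫ ev2G := by rw [hq']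
        _ = (T.obj E2G).map (G.ε.app A.A ≫ A.a) ≫ ev2G := by
            rw [Functor.map_comp, Category.assoc]
    rw [lhs, rhs]
  -- square S1 : G.map q ≫ w = w1 ≫ q'
  have S1 : G.map q ≫ w = w1 ≫ q' := by
    apply h1G.hom_ext
    calc (T.map (G.map q ≫ w)).app A.A ≫ ev1G
        = (T.map (G.map q)).app A.A ≫ ((T.map w).app A.A ≫ ev1G) := by rw [T.map_comp]; simp
      _ = (T.map (G.map q)).app A.A ≫ (T.obj (G.obj E1)).map A.a ≫ M.g2 E1 A.A ≫ G.map ev1 := by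
          rw [hw]
      _ = (T.obj (G.obj E2)).map A.a ≫ (T.map (G.map q)).app (G.obj A.A) ≫
            M.g2 E1 A.A ≫ G.map ev1 := by
          rw [← (T.map (G.map q)).naturality_assoc A.a]
      _ = (T.obj (G.obj E2)).map A.a ≫ M.g2 E2 A.A ≫
            G.map ((T.map q).app A.A) ≫ G.map ev1 := by
          rw [reassoc_of% M.natl A.A q]
      _ = (T.obj (G.obj E2)).map A.a ≫ M.g2 E2 A.A ≫ G.map ((T.map q).app A.A ≫ ev1) := by
          rw [G.map_comp]
      _ = (T.obj (G.obj E2)).map A.a ≫ M.g2 E2 A.A ≫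
            G.map ((T.obj E2).map A.a ≫ ev2) := by rw [hq]
      _ = (T.obj (G.obj E2)).map A.a ≫ (T.obj (G.obj E2)).map (G.map A.a) ≫
            M.g2 E2 (G.obj A.A) ≫ G.map ev2 := by
          rw [G.map_comp, ← reassoc_of% M.natr E2 A.a]
      _ = (T.obj (G.obj E2)).map (A.a ≫ G.map A.a) ≫ M.g2 E2 (G.obj A.A) ≫ G.map ev2 := by
          rw [Functor.map_comp, Category.assoc]
      _ = (T.obj (G.obj E2)).map (A.a ≫ G.δ.app A.A) ≫ M.g2 E2 (G.obj A.A) ≫ G.map ev2 := by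
          rw [A.coassoc]
      _ = (T.map w1).app A.A ≫ (T.obj E2G).map A.a ≫ ev2G := by
          rw [Functor.map_comp, Category.assoc, ← (T.map w1).naturality_assoc A.a ev2G,
            hw1]
      _ = (T.map w1).app A.A ≫ (T.map q').app A.A ≫ ev1G := by rw [hq']
      _ = (T.map (w1 ≫ q')).app A.A ≫ ev1G := by rw [T.map_comp]; simp
  -- squares S2/S3 via a common computation
  have sq : ∀ (x : E3 ⟶ E2) (x' : E3G ⟶ E2G) (d : G.obj A.A ⟶ G.obj (G.obj A.A)),
      ((T.map x).app (G.obj A.A) ≫ ev2 = (T.obj E3).map d ≫ ev3) →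
      ((T.map x').app (G.obj A.A) ≫ ev2G = (T.obj E3G).map d ≫ ev3G) →
      (G.δ.app A.A ≫ G.map d = d ≫ G.δ.app (G.obj A.A)) →
      G.map x ≫ w1 = w2 ≫ x' := by
    intro x x' d hx hx' hd
    apply h2G.hom_ext
    calc (T.map (G.map x ≫ w1)).app (G.obj A.A) ≫ ev2G
        = (T.map (G.map x)).app (G.obj A.A) ≫ ((T.map w1).app (G.obj A.A) ≫ ev2G) := by
          rw [T.map_comp]; simp
      _ = (T.map (G.map x)).app (G.obj A.A) ≫ (T.obj (G.obj E2)).map (G.δ.app A.A) ≫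
            M.g2 E2 (G.obj A.A) ≫ G.map ev2 := by rw [hw1]
      _ = (T.obj (G.obj E3)).map (G.δ.app A.A) ≫ (T.map (G.map x)).app (G.obj (G.obj A.A)) ≫
            M.g2 E2 (G.obj A.A) ≫ G.map ev2 := by
          rw [← (T.map (G.map x)).naturality_assoc (G.δ.app A.A)]
          rfl
      _ = (T.obj (G.obj E3)).map (G.δ.app A.A) ≫ M.g2 E3 (G.obj A.A) ≫
            G.map ((T.map x).app (G.obj A.A)) ≫ G.map ev2 := by
          rw [reassoc_of% M.natl (G.obj A.A) x]
      _ = (T.obj (G.obj E3)).map (G.δ.app A.A) ≫ M.g2 E3 (G.obj A.A) ≫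
            G.map ((T.obj E3).map d ≫ ev3) := by rw [← G.map_comp, hx]
      _ = (T.obj (G.obj E3)).map (G.δ.app A.A) ≫ (T.obj (G.obj E3)).map (G.map d) ≫
            M.g2 E3 (G.obj (G.obj A.A)) ≫ G.map ev3 := by
          rw [G.map_comp, ← reassoc_of% M.natr E3 d]
      _ = (T.obj (G.obj E3)).map (G.δ.app A.A ≫ G.map d) ≫
            M.g2 E3 (G.obj (G.obj A.A)) ≫ G.map ev3 := by
          rw [Functor.map_comp, Category.assoc]
      _ = (T.obj (G.obj E3)).map d ≫ (T.obj (G.obj E3)).map (G.δ.app (G.obj A.A)) ≫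
            M.g2 E3 (G.obj (G.obj A.A)) ≫ G.map ev3 := by
          rw [hd, Functor.map_comp, Category.assoc]
      _ = (T.obj (G.obj E3)).map d ≫ (T.map w2).app (G.obj (G.obj A.A)) ≫ ev3G := by
          rw [hw2]
      _ = (T.map w2).app (G.obj A.A) ≫ (T.obj E3G).map d ≫ ev3G := by
          rw [(T.map w2).naturality_assoc d ev3G]
      _ = (T.map w2).app (G.obj A.A) ≫ (T.map x').app (G.obj A.A) ≫ ev2G := by rw [hx']
      _ = (T.map (w2 ≫ x')).app (G.obj A.A) ≫ ev2G := by rw [T.map_comp]; simp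
  have S2 : G.map u ≫ w1 = w2 ≫ u' := by
    refine sq u u' (G.δ.app A.A) hu hu' ?_
    exact G.coassoc A.A
  have S3 : G.map v ≫ w1 = w2 ≫ v' := by
    refine sq v v' (G.map A.a) hv hv' ?_
    have hnat := G.δ.naturality A.a
    simp only [Functor.comp_map] at hnat
    exact hnat.symm
  -- epimorphisms
  haveI : IsSplitEpi q' := IsSplitEpi.mk' ⟨s', R1'⟩
  haveI epiq' : Epi q' := IsSplitEpi.epi q'
  haveI : IsSplitEpi (G.map q) := IsSplitEpi.mk' ⟨G.map s, by
    rw [← G.map_comp, R1, G.map_id]⟩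
  haveI epiGq : Epi (G.map q) := IsSplitEpi.epi (G.map q)
  -- the candidate inverse
  set k : E1G ⟶ G.obj E1 := s' ≫ inv w1 ≫ G.map q with hk
  have coeq : u' ≫ inv w1 ≫ G.map q = v' ≫ inv w1 ≫ G.map q := by
    rw [← cancel_epi w2, ← Category.assoc, ← S2, ← Category.assoc w2, ← S3]
    simp only [Category.assoc, IsIso.hom_inv_id_assoc]
    rw [← G.map_comp, ← G.map_comp, R4]
  have claimA : q' ≫ k = inv w1 ≫ G.map q := by
    rw [hk, ← Category.assoc, ← R3', Category.assoc, ← coeq, ← Category.assoc, R2',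
      Category.id_comp]
  refine ⟨⟨k, ?_, ?_⟩⟩
  · rw [← cancel_epi (G.map q), ← Category.assoc, S1, Category.assoc, claimA,
      IsIso.hom_inv_id_assoc, Category.comp_id]
  · rw [← cancel_epi q', ← Category.assoc, claimA, Category.assoc, S1,
      IsIso.inv_hom_id_assoc, Category.comp_id]

end WoodStmt5
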